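/- With A and J the n×n quaternionic matrices defined in the context, for every t ∈ ℝ one has exp(t·A) = I − J + cos(t)·J + sin(t)·A, where I is the n×n identity matrix and exp denotes the exponential of quaternionic matrices (defined by the convergent power series Σ_{k≥0} (tA)^k/k! in the Banach ℝ-algebra of n×n matrices over ℍ). -/

import Mathlib

open Matrix
open scoped Quaternion
open scoped Nat

private lemma quat_div_coe (r : ℝ) (q : ℍ[ℝ]) : q / (r : ℍ[ℝ]) = r⁻¹ • q := by
  rw [div_eq_mul_inv, ← Quaternion.coe_inv (R := ℝ), Quaternion.mul_coe_eq_smul]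

private lemma quat_sum_star_mul {m : ℕ} (v : Fin m → ℍ[ℝ]) (y : ℍ[ℝ]) :
    ∑ k, star (v k) * (v k * y) = (∑ k, Quaternion.normSq (v k)) • y := by
  rw [Finset.sum_smul]
  refine Finset.sum_congr rfl fun k _ => ?_
  rw [← mul_assoc, Quaternion.star_mul_self, Quaternion.coe_mul_eq_smul]

private lemma quat_sum_star_mul' {m : ℕ} (v : Fin m → ℍ[ℝ]) :
    ∑ k, star (v k) * v k = ((∑ k, Quaternion.normSq (v k) : ℝ) : ℍ[ℝ]) := by
  rw [← Quaternion.algebraMap_def, map_sum]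
  exact Finset.sum_congr rfl fun k _ => Quaternion.star_mul_self (v k)

private lemma exp_eq_of_sq {𝔸 : Type*} [Ring 𝔸] [Algebra ℝ 𝔸] [TopologicalSpace 𝔸]
    [IsTopologicalRing 𝔸] [T2Space 𝔸] [ContinuousSMul ℝ 𝔸] (A J : 𝔸)
    (hAA : A * A = -J) (hAJ : A * J = A) (hJJ : J * J = J) (t : ℝ) :
    NormedSpace.exp (t • A) = 1 - J + Real.cos t • J + Real.sin t • A := by
  have hA2 : A ^ 2 = -J := by rw [sq, hAA]
  have hodd : ∀ m : ℕ, A ^ (2 * m + 1) = ((-1 : ℝ) ^ m) • A := by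
    intro m
    induction m with
    | zero => simp
    | succ m ih =>
      have : 2 * (m + 1) + 1 = (2 * m + 1) + 2 := by ring
      rw [this, pow_add, ih, hA2, smul_mul_assoc, mul_neg, hAJ, smul_neg, ← neg_smul]
      congr 1
      ring
  have heven : ∀ m : ℕ, A ^ (2 * m + 2) = ((-1 : ℝ) ^ (m + 1)) • J := by
    intro m
    induction m with
    | zero => simp [hA2]
    | succ m ih =>
      have : 2 * (m + 1) + 2 = (2 * m + 2) + 2 := by ring
      rw [this, pow_add, ih, hA2, smul_mul_assoc, mul_neg, hJJ, smul_neg, ← neg_smul]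
      congr 1
      ring
  set f : ℕ → 𝔸 := fun k => ((k ! : ℝ))⁻¹ • (t • A) ^ k with hf
  have hfe : (fun m => f (2 * m)) = fun m =>
      ((-1 : ℝ) ^ m * t ^ (2 * m) / (2 * m)!) • J + (if m = 0 then 1 - J else 0) := by
    funext m
    cases m with
    | zero => simp [hf]
    | succ m =>
      simp only [hf, Nat.succ_ne_zero, if_false, add_zero, smul_pow]
      rw [show 2 * (m + 1) = 2 * m + 2 from by ring, heven m, smul_smul, smul_smul]
      congr 1
      ring
  have hfo : (fun m => f (2 * m + 1)) = fun m =>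
      ((-1 : ℝ) ^ m * t ^ (2 * m + 1) / (2 * m + 1)!) • A := by
    funext m
    simp only [hf, smul_pow]
    rw [hodd m, smul_smul, smul_smul]
    congr 1
    ring
  have he : HasSum (fun m => f (2 * m)) (Real.cos t • J + (1 - J)) := by
    rw [hfe]
    exact ((Real.hasSum_cos t).smul_const J).add (hasSum_ite_eq 0 (1 - J))
  have ho : HasSum (fun m => f (2 * m + 1)) (Real.sin t • A) := by
    rw [hfo]
    exact (Real.hasSum_sin t).smul_const A
  have hsum := he.even_add_odd ho
  have htsum := hsum.tsum_eq
  simp only [hf] at htsum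
  rw [NormedSpace.exp_eq_tsum ℝ]
  show (∑' (k : ℕ), ((k ! : ℝ))⁻¹ • (t • A) ^ k) = _
  rw [htsum]
  abel

set_option maxHeartbeats 1000000 in
/-- With `A` and `J` the `n×n` quaternionic matrices defined in the context,
for every `t ∈ ℝ` one has `exp(t·A) = I − J + cos(t)·J + sin(t)·A`. -/
theorem stmt_9 (n : ℕ) (hn : 2 ≤ n) (z : ℍ[ℝ]) (hz : z + star z = 0)
    (v : Fin (n - 1) → ℍ[ℝ]) (hv : v ≠ 0)
    (hnorm : Quaternion.normSq z + ∑ i, Quaternion.normSq (v i) = 1)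
    (A J : Matrix (Fin 1 ⊕ Fin (n - 1)) (Fin 1 ⊕ Fin (n - 1)) ℍ[ℝ])
    (hA : A = Matrix.fromBlocks
      (Matrix.of fun _ _ => z)
      (Matrix.of fun _ j => -star (v j))
      (Matrix.of fun i _ => v i)
      (Matrix.of fun i j =>
        -(v i * z * star (v j)) / ((∑ k, Quaternion.normSq (v k) : ℝ) : ℍ[ℝ])))
    (hJ : J = Matrix.fromBlocks 1 0 0
      (Matrix.of fun i j =>
        v i * star (v j) / ((∑ k, Quaternion.normSq (v k) : ℝ) : ℍ[ℝ]))) :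
    ∀ t : ℝ, NormedSpace.exp (t • A) = 1 - J + Real.cos t • J + Real.sin t • A := by
  intro t
  have key : A * J = A ∧ J * A = A ∧ A * A = -J ∧ J * J = J := by
    have hs0 : 0 < ∑ k, Quaternion.normSq (v k) := by
      obtain ⟨i, hi⟩ := Function.ne_iff.mp hv
      exact Finset.sum_pos' (fun k _ => Quaternion.normSq_nonneg)
        ⟨i, Finset.mem_univ i, lt_of_le_of_ne Quaternion.normSq_nonneg
          (Ne.symm (Quaternion.normSq_ne_zero.mpr hi))⟩
    set s : ℝ := ∑ k, Quaternion.normSq (v k) with hs_def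
    have hsne : s ≠ 0 := ne_of_gt hs0
    have hss : s⁻¹ * s⁻¹ * s = s⁻¹ := by field_simp
    have hss2 : s⁻¹ * (s⁻¹ * s) = s⁻¹ := by field_simp
    have hzz : z * z = ((-(Quaternion.normSq z) : ℝ) : ℍ[ℝ]) := by
      have h1 : star z = -z := by
        have := hz
        rw [add_comm] at this
        rw [add_eq_zero_iff_eq_neg] at this
        exact this
      nth_rewrite 2 [show z = -star z by rw [h1, neg_neg]]
      rw [mul_neg, Quaternion.self_mul_star, Quaternion.coe_neg]
    have hbJ : (Matrix.of fun i j => v i * star (v j) / ((s : ℝ) : ℍ[ℝ]))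
        = Matrix.of fun i j => s⁻¹ • (v i * star (v j)) :=
      Matrix.ext fun i j => quat_div_coe s _
    have hbA : (Matrix.of fun i j => -(v i * z * star (v j)) / ((s : ℝ) : ℍ[ℝ]))
        = Matrix.of fun i j => s⁻¹ • -(v i * z * star (v j)) :=
      Matrix.ext fun i j => quat_div_coe s _
    rw [hbJ] at hJ
    rw [hbA] at hA
    have hL1 : ∀ y, ∑ k, star (v k) * (v k * y) = s • y := fun y => by
      rw [quat_sum_star_mul, ← hs_def]
    have hL2 : ∑ k, star (v k) * v k = ((s : ℝ) : ℍ[ℝ]) := by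
      rw [quat_sum_star_mul', ← hs_def]
    refine ⟨?_, ?_, ?_, ?_⟩
    · -- A * J = A
      rw [hA, hJ, Matrix.fromBlocks_multiply, Matrix.fromBlocks_inj]
      refine ⟨by simp, ?_, by simp, ?_⟩
      · refine Matrix.ext fun i j => ?_
        simp only [Matrix.add_apply, Matrix.mul_apply, Matrix.of_apply, Matrix.mul_zero,
          Matrix.zero_apply, zero_add, add_zero, mul_smul_comm, neg_mul, mul_assoc]
        simp_rw [smul_neg]
        rw [Finset.sum_neg_distrib, ← Finset.smul_sum, hL1, smul_smul,
          inv_mul_cancel₀ hsne, one_smul]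
      · refine Matrix.ext fun i j => ?_
        simp only [Matrix.add_apply, Matrix.mul_apply, Matrix.of_apply, Matrix.mul_zero,
          Matrix.zero_apply, zero_add, add_zero, smul_mul_assoc, mul_smul_comm, smul_smul,
          neg_mul, mul_neg, mul_assoc]
        simp_rw [smul_neg]
        rw [Finset.sum_neg_distrib, ← Finset.smul_sum, ← Finset.mul_sum, ← Finset.mul_sum, hL1]
        rw [mul_smul_comm, mul_smul_comm, smul_smul, hss]
    · -- J * A = A
      rw [hA, hJ, Matrix.fromBlocks_multiply, Matrix.fromBlocks_inj]
      refine ⟨by simp, by simp, ?_, ?_⟩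
      · refine Matrix.ext fun i j => ?_
        simp only [Matrix.add_apply, Matrix.mul_apply, Matrix.of_apply, Matrix.zero_mul,
          Matrix.zero_apply, zero_add, add_zero, smul_mul_assoc, mul_assoc]
        rw [← Finset.smul_sum, ← Finset.mul_sum, hL2, Quaternion.mul_coe_eq_smul,
          smul_smul, inv_mul_cancel₀ hsne, one_smul]
      · refine Matrix.ext fun i j => ?_
        simp only [Matrix.add_apply, Matrix.mul_apply, Matrix.of_apply, Matrix.zero_mul,
          Matrix.zero_apply, zero_add, add_zero, smul_mul_assoc, mul_smul_comm, smul_smul,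
          neg_mul, mul_neg, mul_assoc]
        simp_rw [smul_neg]
        rw [Finset.sum_neg_distrib, ← Finset.smul_sum, ← Finset.smul_sum, ← Finset.mul_sum, hL1]
        rw [mul_smul_comm, smul_smul, smul_smul, hss]
    · -- A * A = -J
      rw [hA, hJ, Matrix.fromBlocks_multiply, Matrix.fromBlocks_neg, Matrix.fromBlocks_inj]
      refine ⟨?_, ?_, ?_, ?_⟩
      · refine Matrix.ext fun i j => ?_
        have hij : i = j := Subsingleton.elim i j
        subst hij
        simp only [Matrix.add_apply, Matrix.mul_apply, Matrix.of_apply, Fin.sum_univ_one,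
          neg_mul, Matrix.neg_apply, Matrix.one_apply_eq]
        rw [Finset.sum_neg_distrib, hL2, hzz,
          show (-(Quaternion.normSq z) : ℝ) = s - 1 by linarith]
        push_cast
        abel
      · refine Matrix.ext fun i j => ?_
        simp only [Matrix.add_apply, Matrix.mul_apply, Matrix.of_apply, Fin.sum_univ_one,
          mul_neg, neg_mul, neg_neg, smul_neg, mul_smul_comm, mul_assoc, Matrix.neg_apply,
          Matrix.zero_apply, neg_zero]
        rw [← Finset.smul_sum, hL1, smul_smul, inv_mul_cancel₀ hsne, one_smul, neg_add_cancel]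
      · refine Matrix.ext fun i j => ?_
        simp only [Matrix.add_apply, Matrix.mul_apply, Matrix.of_apply, Fin.sum_univ_one,
          mul_neg, neg_mul, neg_neg, smul_neg, smul_mul_assoc, mul_assoc, Matrix.neg_apply,
          Matrix.zero_apply, neg_zero]
        rw [Finset.sum_neg_distrib, ← Finset.smul_sum, ← Finset.mul_sum, ← Finset.mul_sum, hL2,
          Quaternion.mul_coe_eq_smul, mul_smul_comm, smul_smul, inv_mul_cancel₀ hsne, one_smul,
          add_neg_cancel]
      · refine Matrix.ext fun i j => ?_
        simp only [Matrix.add_apply, Matrix.mul_apply, Matrix.of_apply, Fin.sum_univ_one,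
          mul_neg, neg_mul, neg_neg, smul_neg, smul_mul_assoc, mul_smul_comm, smul_smul,
          mul_assoc, Matrix.neg_apply]
        rw [← Finset.smul_sum, ← Finset.mul_sum, ← Finset.mul_sum, hL1]
        simp only [mul_smul_comm, smul_smul]
        rw [← mul_assoc z z, hzz, Quaternion.coe_mul_eq_smul]
        simp only [mul_smul_comm, smul_smul]
        rw [← neg_one_smul ℝ (v i * star (v j)), ← add_smul, ← neg_smul]
        congr 1
        field_simp
        nlinarith [hnorm]
    · -- J * J = J
      rw [hJ, Matrix.fromBlocks_multiply, Matrix.fromBlocks_inj]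
      refine ⟨by simp, by simp, by simp, ?_⟩
      refine Matrix.ext fun i j => ?_
      simp only [Matrix.add_apply, Matrix.mul_apply, Matrix.of_apply, Matrix.zero_apply,
        Matrix.zero_mul, zero_mul, zero_add, smul_mul_assoc, mul_smul_comm, smul_smul,
        mul_assoc]
      rw [← Finset.smul_sum, ← Finset.mul_sum, quat_sum_star_mul, ← hs_def]
      rw [mul_smul_comm, smul_smul, hss]
  exact exp_eq_of_sq A J key.2.2.1 key.1 key.2.2.2 t
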